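/- Suppose G acts on a uniform space X discretely, i.e., the action is equicontinuous and uniformly properly discontinuous. Then the projection p: X → X/G is a uniform covering map. -/

import Mathlib

open scoped Uniformity

/-- An `E`-chain: consecutive members of the list are `E`-related. -/
def ChainIn {α : Type*} (E : Set (α × α)) (c : List α) : Prop :=
  c.Chain' fun a b => (a, b) ∈ E

/-- The image `f(E)` of a relation under a map. -/
def imgRel {α β : Type*} (f : α → β) (E : Set (α × α)) : Set (β × β) :=
  Prod.map f f '' E

/-- The orbit projection `p : X → X/G`. -/
def proj (G X : Type*) [Group G] [MulAction G X] :
    X → Quotient (MulAction.orbitRel G X) :=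
  Quotient.mk (MulAction.orbitRel G X)

/-- `G_F`: the subgroup of `G` generated by `S_F = {h | (x, h • x) ∈ F for some x}`. -/
def GF (G : Type*) {X : Type*} [Group G] [MulAction G X] (F : Set (X × X)) : Subgroup G :=
  Subgroup.closure {h : G | ∃ x : X, (x, h • x) ∈ F}

/-- Chain lifting property for `f : X → Y`: for every (symmetric) entourage `E` of `X`
there is an entourage `F` such that every `f(F)`-chain starting at `f x₀` lifts to an
`E`-chain starting at `x₀`. -/
def HasChainLifting {X Y : Type*} [UniformSpace X] (f : X → Y) : Prop :=
  ∀ E ∈ 𝓤 X, SetRel.IsSymm E → ∃ F ∈ 𝓤 X, SetRel.IsSymm F ∧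
    ∀ (x₀ : X) (d : List Y), ChainIn (imgRel f F) d → d.head? = some (f x₀) →
      ∃ c : List X, ChainIn E c ∧ c.head? = some x₀ ∧ c.map f = d

/-- Uniqueness of chain lifts: there is an entourage `F` such that two `F`-chains with the
same origin and the same image are equal. -/
def HasUniqueChainLifts {X Y : Type*} [UniformSpace X] (f : X → Y) : Prop :=
  ∃ F ∈ 𝓤 X, SetRel.IsSymm F ∧
    ∀ α β : List X, ChainIn F α → ChainIn F β →
      α.head? = β.head? → α.map f = β.map f → α = β

/-- Approximate uniqueness of chain lifts: for every entourage `E` there is an entourage `F`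
such that two `F`-chains with the same origin and the same image are `E`-close. -/
def HasApproxUniqueChainLifts {X Y : Type*} [UniformSpace X] (f : X → Y) : Prop :=
  ∀ E ∈ 𝓤 X, SetRel.IsSymm E → ∃ F ∈ 𝓤 X, SetRel.IsSymm F ∧
    ∀ α β : List X, ChainIn F α → ChainIn F β →
      α.head? = β.head? → α.map f = β.map f →
        List.Forall₂ (fun a b => (a, b) ∈ E) α β

/-- Neutral action. -/
def Neutral (G X : Type*) [Group G] [MulAction G X] [UniformSpace X] : Prop :=
  ∀ E ∈ 𝓤 X, SetRel.IsSymm E → ∃ F ∈ 𝓤 X, SetRel.IsSymm F ∧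
    ∀ (x y : X) (h : G), (x, h • y) ∈ F → ∃ g : G, (g • x, y) ∈ E

/-- Uniformly properly discontinuous action. -/
def UnifProperlyDiscontinuous (G X : Type*) [Group G] [MulAction G X] [UniformSpace X] : Prop :=
  ∃ E ∈ 𝓤 X, SetRel.IsSymm E ∧ ∀ (x : X) (g : G), (x, g • x) ∈ E → g = 1

/-- Equicontinuous action. -/
def EquicontinuousAction (G X : Type*) [Group G] [MulAction G X] [UniformSpace X] : Prop :=
  ∀ E ∈ 𝓤 X, ∃ F ∈ 𝓤 X, ∀ (g : G) (x y : X), (x, y) ∈ F → (g • x, g • y) ∈ E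

/-- Small scale uniformly continuous action. -/
def SSUnifCont (G X : Type*) [Group G] [MulAction G X] [UniformSpace X] : Prop :=
  ∀ E ∈ 𝓤 X, SetRel.IsSymm E → ∃ F ∈ 𝓤 X, SetRel.IsSymm F ∧
    ∀ g ∈ GF G F, {q : X × X | (g • q.1, g • q.2) ∈ E} ∈ 𝓤 X

/-- Small scale uniformly equicontinuous action. -/
def SSUnifEquicont (G X : Type*) [Group G] [MulAction G X] [UniformSpace X] : Prop :=
  ∀ E ∈ 𝓤 X, SetRel.IsSymm E → ∃ F ∈ 𝓤 X, SetRel.IsSymm F ∧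
    ∀ g ∈ GF G F, ∀ x y : X, (x, y) ∈ F → (g • x, g • y) ∈ E

/-- Small scale bounded orbits: the orbits of `G_F` are `E`-bounded. -/
def SSBoundedOrbits (G X : Type*) [Group G] [MulAction G X] [UniformSpace X] : Prop :=
  ∀ E ∈ 𝓤 X, SetRel.IsSymm E → ∃ F ∈ 𝓤 X, SetRel.IsSymm F ∧
    ∀ x : X, ∀ g ∈ GF G F, ∀ g' ∈ GF G F, (g • x, g' • x) ∈ E

/-- Chain connected uniform space. -/
def ChainConnectedU (X : Type*) [UniformSpace X] : Prop :=
  ∀ E ∈ 𝓤 X, SetRel.IsSymm E → ∀ x y : X,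
    ∃ c : List X, ChainIn E c ∧ c.head? = some x ∧ c.getLast? = some y

/-- A discrete action (equicontinuous and uniformly properly discontinuous) induces a
uniform covering map `X → X/G`. -/
lemma proj_eq_iff {G X : Type*} [Group G] [MulAction G X] {a b : X} :
    proj G X a = proj G X b ↔ ∃ g : G, g • b = a := by
  rw [proj, Quotient.eq]
  exact (MulAction.orbitRel_apply (G := G)).trans MulAction.mem_orbit_iff

lemma proj_smul {G X : Type*} [Group G] [MulAction G X] (g : G) (x : X) :
    proj G X (g • x) = proj G X x :=
  proj_eq_iff.2 ⟨g, rfl⟩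

theorem stmt16 (G X : Type*) [Group G] [MulAction G X] [UniformSpace X]
    (hequi : EquicontinuousAction G X) (hupd : UnifProperlyDiscontinuous G X) :
    HasChainLifting (proj G X) ∧ HasUniqueChainLifts (proj G X) := by
  constructor
  · -- chain lifting
    intro E hE _hEs
    obtain ⟨F₀, hF₀, hF₀prop⟩ := hequi E hE
    refine ⟨SetRel.symmetrize F₀, symmetrize_mem_uniformity hF₀, inferInstance, ?_⟩
    intro x₀ d hchain hhead
    induction d generalizing x₀ with
    | nil => simp at hhead
    | cons y d' ih =>
      have hy : y = proj G X x₀ := by simpa using hhead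
      match d', hchain with
      | [], _ =>
        exact ⟨[x₀], List.isChain_singleton x₀, rfl, by simp [hy]⟩
      | z :: d'', hchain =>
        have hch := (List.isChain_cons_cons.1 hchain)
        obtain ⟨⟨a, b⟩, habF, hab⟩ := hch.1
        have hpa : proj G X a = proj G X x₀ :=
          (congrArg Prod.fst hab).trans hy
        obtain ⟨g, hg⟩ := proj_eq_iff.1 hpa.symm
        set x₁ : X := g • b with hx₁
        have hE1 : (x₀, x₁) ∈ E := by
          have : (g • a, g • b) ∈ E := hF₀prop g a b habF.1
          rwa [hg] at this
        have hpz : proj G X x₁ = z := by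
          rw [hx₁, proj_smul]
          exact congrArg Prod.snd hab
        obtain ⟨c', hc'chain, hc'head, hc'map⟩ := ih x₁ hch.2 (by simp [hpz])
        match c', hc'head with
        | x₁' :: rest, hc'head =>
          have hx₁' : x₁' = x₁ := by simpa using hc'head
          subst hx₁'
          exact ⟨x₀ :: x₁ :: rest, List.isChain_cons_cons.2 ⟨hE1, hc'chain⟩, rfl,
            by simp [hy, hc'map]⟩
  · -- unique chain lifts
    obtain ⟨E₀, hE₀, hE₀s, hE₀prop⟩ := hupd
    obtain ⟨W, hW, hWcomp⟩ := comp_mem_uniformity_sets hE₀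
    refine ⟨SetRel.symmetrize W, symmetrize_mem_uniformity hW, inferInstance, ?_⟩
    intro α β hα hβ hhead hmap
    induction α generalizing β with
    | nil =>
      cases β with
      | nil => rfl
      | cons b β' => simp at hmap
    | cons a α' ih =>
      cases β with
      | nil => simp at hmap
      | cons b β' =>
        have hab : a = b := by simpa using hhead
        subst hab
        have hmap' : α'.map (proj G X) = β'.map (proj G X) := by simpa using hmap
        match α', β', hmap' with
        | [], [], _ => rfl
        | [], b' :: β'', hmap' => simp at hmap'
        | a' :: α'', [], hmap' => simp at hmap'
        | a' :: α'', b' :: β'', hmap' =>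
          have h1 : (a, a') ∈ SetRel.symmetrize W := (List.isChain_cons_cons.1 hα).1
          have h2 : (a, b') ∈ SetRel.symmetrize W := (List.isChain_cons_cons.1 hβ).1
          have hp : proj G X a' = proj G X b' := by simpa using congrArg List.head? hmap'
          obtain ⟨g, hg⟩ := proj_eq_iff.1 hp
          have hcomp : (b', a') ∈ E₀ :=
            hWcomp ⟨a, h2.2, h1.1⟩
          have hg1 : g = 1 := hE₀prop b' g (by rw [hg]; exact hcomp)
          have hab' : a' = b' := by rw [← hg, hg1, one_smul]
          subst hab'
          have := ih (a' :: β'') (List.isChain_cons_cons.1 hα).2 (List.isChain_cons_cons.1 hβ).2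
            rfl hmap'
          rw [this]
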